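/- arXiv:1305.2826 — 2 statements merged into one kernel-verified Lean document; each statement's English description precedes it below -/
import Mathlib

section
/- Let w, t, u, s ∈ Q and let 1 ≤ i, k, r, p ≤ m with i ≠ k and r ≠ p. Then the four-fold commutator [[E_{i,w}, E_{k,t}], [E_{r,u}, E_{p,s}]] is the identity automorphism of M. -/
open QuadraticMap
open scoped commutatorElement

/-- The DSER elementary orthogonal transformation `E_{i,w}` on `M = Q ⊕ P ⊕ P*`,
`P = A^m`:  `E_{i,w}(z,x,f) = (z − f(xᵢ)•w, x + ⟨w,z⟩•xᵢ − f(xᵢ)·q(w)•xᵢ, f)`. -/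
noncomputable def Eplus {A Q : Type*} [CommRing A] [AddCommGroup Q] [Module A Q]
    {m : ℕ} (q : QuadraticForm A Q) (i : Fin m) (w : Q) :
    (Q × (Fin m → A) × (Fin m → A)) ≃ₗ[A] (Q × (Fin m → A) × (Fin m → A)) where
  toFun p := (p.1 - p.2.2 i • w,
    p.2.1 + polar ⇑q w p.1 • (Pi.single i 1 : Fin m → A)
      - (p.2.2 i * q w) • (Pi.single i 1 : Fin m → A),
    p.2.2)
  invFun p := (p.1 + p.2.2 i • w,
    p.2.1 - polar ⇑q w p.1 • (Pi.single i 1 : Fin m → A)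
      - (p.2.2 i * q w) • (Pi.single i 1 : Fin m → A),
    p.2.2)
  map_add' p p' := by
    obtain ⟨z, x, f⟩ := p
    obtain ⟨z', x', f'⟩ := p'
    refine Prod.ext ?_ (Prod.ext ?_ rfl)
    · show z + z' - (f i + f' i) • w = (z - f i • w) + (z' - f' i • w)
      module
    · show x + x' + polar ⇑q w (z + z') • (Pi.single i 1 : Fin m → A)
        - ((f i + f' i) * q w) • (Pi.single i 1 : Fin m → A) = _
      rw [polar_add_right]
      show _ = (x + polar ⇑q w z • (Pi.single i 1 : Fin m → A) - (f i * q w) • (Pi.single i 1 : Fin m → A))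
        + (x' + polar ⇑q w z' • (Pi.single i 1 : Fin m → A) - (f' i * q w) • (Pi.single i 1 : Fin m → A))
      module
  map_smul' a p := by
    obtain ⟨z, x, f⟩ := p
    refine Prod.ext ?_ (Prod.ext ?_ rfl)
    · show a • z - (a • f) i • w = a • (z - f i • w)
      simp only [Pi.smul_apply, smul_eq_mul]
      module
    · show a • x + polar ⇑q w (a • z) • (Pi.single i 1 : Fin m → A)
        - ((a • f) i * q w) • (Pi.single i 1 : Fin m → A)
        = a • (x + polar ⇑q w z • (Pi.single i 1 : Fin m → A) - (f i * q w) • (Pi.single i 1 : Fin m → A))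
      rw [polar_smul_right]
      simp only [Pi.smul_apply, smul_eq_mul]
      module
  left_inv p := by
    obtain ⟨z, x, f⟩ := p
    refine Prod.ext ?_ (Prod.ext ?_ rfl)
    · show z - f i • w + f i • w = z
      module
    · show x + polar ⇑q w z • (Pi.single i 1 : Fin m → A) - (f i * q w) • (Pi.single i 1 : Fin m → A)
        - polar ⇑q w (z - f i • w) • (Pi.single i 1 : Fin m → A)
        - (f i * q w) • (Pi.single i 1 : Fin m → A) = x
      rw [polar_sub_right, polar_smul_right, polar_self]
      simp only [smul_eq_mul]
      module
  right_inv p := by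
    obtain ⟨z, x, f⟩ := p
    refine Prod.ext ?_ (Prod.ext ?_ rfl)
    · show z + f i • w - f i • w = z
      module
    · show x - polar ⇑q w z • (Pi.single i 1 : Fin m → A) - (f i * q w) • (Pi.single i 1 : Fin m → A)
        + polar ⇑q w (z + f i • w) • (Pi.single i 1 : Fin m → A)
        - (f i * q w) • (Pi.single i 1 : Fin m → A) = x
      rw [polar_add_right, polar_smul_right, polar_self]
      simp only [smul_eq_mul]
      module

/-- The DSER elementary orthogonal transformation `E*_{i,w}` on `M = Q ⊕ P ⊕ P*`:
`E*_{i,w}(z,x,f) = (z − fᵢ(x)•w, x, f + ⟨w,z⟩•fᵢ − fᵢ(x)·q(w)•fᵢ)`. -/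
noncomputable def Estar {A Q : Type*} [CommRing A] [AddCommGroup Q] [Module A Q]
    {m : ℕ} (q : QuadraticForm A Q) (i : Fin m) (w : Q) :
    (Q × (Fin m → A) × (Fin m → A)) ≃ₗ[A] (Q × (Fin m → A) × (Fin m → A)) where
  toFun p := (p.1 - p.2.1 i • w,
    p.2.1,
    p.2.2 + polar ⇑q w p.1 • (Pi.single i 1 : Fin m → A)
      - (p.2.1 i * q w) • (Pi.single i 1 : Fin m → A))
  invFun p := (p.1 + p.2.1 i • w,
    p.2.1,
    p.2.2 - polar ⇑q w p.1 • (Pi.single i 1 : Fin m → A)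
      - (p.2.1 i * q w) • (Pi.single i 1 : Fin m → A))
  map_add' p p' := by
    obtain ⟨z, x, f⟩ := p
    obtain ⟨z', x', f'⟩ := p'
    refine Prod.ext ?_ (Prod.ext rfl ?_)
    · show z + z' - (x i + x' i) • w = (z - x i • w) + (z' - x' i • w)
      module
    · show f + f' + polar ⇑q w (z + z') • (Pi.single i 1 : Fin m → A)
        - ((x i + x' i) * q w) • (Pi.single i 1 : Fin m → A) = _
      rw [polar_add_right]
      show _ = (f + polar ⇑q w z • (Pi.single i 1 : Fin m → A)
          - (x i * q w) • (Pi.single i 1 : Fin m → A))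
        + (f' + polar ⇑q w z' • (Pi.single i 1 : Fin m → A)
          - (x' i * q w) • (Pi.single i 1 : Fin m → A))
      module
  map_smul' a p := by
    obtain ⟨z, x, f⟩ := p
    refine Prod.ext ?_ (Prod.ext rfl ?_)
    · show a • z - (a • x) i • w = a • (z - x i • w)
      simp only [Pi.smul_apply, smul_eq_mul]
      module
    · show a • f + polar ⇑q w (a • z) • (Pi.single i 1 : Fin m → A)
        - ((a • x) i * q w) • (Pi.single i 1 : Fin m → A)
        = a • (f + polar ⇑q w z • (Pi.single i 1 : Fin m → A)
          - (x i * q w) • (Pi.single i 1 : Fin m → A))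
      rw [polar_smul_right]
      simp only [Pi.smul_apply, smul_eq_mul]
      module
  left_inv p := by
    obtain ⟨z, x, f⟩ := p
    refine Prod.ext ?_ (Prod.ext rfl ?_)
    · show z - x i • w + x i • w = z
      module
    · show f + polar ⇑q w z • (Pi.single i 1 : Fin m → A)
        - (x i * q w) • (Pi.single i 1 : Fin m → A)
        - polar ⇑q w (z - x i • w) • (Pi.single i 1 : Fin m → A)
        - (x i * q w) • (Pi.single i 1 : Fin m → A) = f
      rw [polar_sub_right, polar_smul_right, polar_self]
      simp only [smul_eq_mul]
      module
  right_inv p := by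
    obtain ⟨z, x, f⟩ := p
    refine Prod.ext ?_ (Prod.ext rfl ?_)
    · show z + x i • w - x i • w = z
      module
    · show f - polar ⇑q w z • (Pi.single i 1 : Fin m → A)
        - (x i * q w) • (Pi.single i 1 : Fin m → A)
        + polar ⇑q w (z + x i • w) • (Pi.single i 1 : Fin m → A)
        - (x i * q w) • (Pi.single i 1 : Fin m → A) = f
      rw [polar_add_right, polar_smul_right, polar_self]
      simp only [smul_eq_mul]
      module

lemma Eplus_apply {A Q : Type*} [CommRing A] [AddCommGroup Q] [Module A Q]
    {m : ℕ} (q : QuadraticForm A Q) (i : Fin m) (w : Q) (z : Q) (x f : Fin m → A) :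
    Eplus q i w (z, x, f) = (z - f i • w,
      x + polar ⇑q w z • (Pi.single i 1 : Fin m → A) - (f i * q w) • (Pi.single i 1 : Fin m → A),
      f) := rfl

lemma Eplus_symm_apply {A Q : Type*} [CommRing A] [AddCommGroup Q] [Module A Q]
    {m : ℕ} (q : QuadraticForm A Q) (i : Fin m) (w : Q) (z : Q) (x f : Fin m → A) :
    (Eplus q i w)⁻¹ (z, x, f) = (z + f i • w,
      x - polar ⇑q w z • (Pi.single i 1 : Fin m → A) - (f i * q w) • (Pi.single i 1 : Fin m → A),
      f) := rfl

lemma comm_Eplus_apply {A Q : Type*} [CommRing A] [AddCommGroup Q] [Module A Q]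
    {m : ℕ} (q : QuadraticForm A Q) (i k : Fin m) (w t : Q) (z : Q) (x f : Fin m → A) :
    ⁅Eplus q i w, Eplus q k t⁆ (z, x, f) = (z,
      x + (f i * polar ⇑q t w) • (Pi.single k 1 : Fin m → A)
        - (f k * polar ⇑q w t) • (Pi.single i 1 : Fin m → A),
      f) := by
  show Eplus q i w (Eplus q k t ((Eplus q i w)⁻¹ ((Eplus q k t)⁻¹ (z, x, f)))) = _
  rw [Eplus_symm_apply, Eplus_symm_apply, Eplus_apply, Eplus_apply]
  refine Prod.ext ?_ (Prod.ext ?_ rfl)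
  · show z + f k • t + f i • w - f k • t - f i • w = z
    module
  · simp only [polar_add_right, polar_sub_right, polar_smul_right, polar_self, smul_eq_mul,
      two_smul]
    module

theorem fourfold_commutator_EplusEplus_EplusEplus
    {A Q : Type*} [CommRing A] [Invertible (2 : A)] [AddCommGroup Q] [Module A Q]
    {m : ℕ} (q : QuadraticForm A Q) (i k r p : Fin m)
    (hik : i ≠ k) (hrp : r ≠ p) (w t u s : Q) :
    ⁅⁅Eplus q i w, Eplus q k t⁆, ⁅Eplus q r u, Eplus q p s⁆⁆ = 1 := by
  have h1 := comm_Eplus_apply q i k w t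
  have h2 := comm_Eplus_apply q r p u s
  rw [commutatorElement_eq_one_iff_mul_comm]
  refine LinearEquiv.ext fun pt => ?_
  obtain ⟨z, x, f⟩ := pt
  show (⁅Eplus q i w, Eplus q k t⁆ : _ ≃ₗ[A] _) (⁅Eplus q r u, Eplus q p s⁆ (z, x, f))
    = (⁅Eplus q r u, Eplus q p s⁆ : _ ≃ₗ[A] _) (⁅Eplus q i w, Eplus q k t⁆ (z, x, f))
  rw [h1, h2, h1, h2]
  refine Prod.ext rfl (Prod.ext ?_ rfl)
  show x + (f r * polar ⇑q s u) • (Pi.single p 1 : Fin m → A)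
      - (f p * polar ⇑q u s) • (Pi.single r 1 : Fin m → A)
      + (f i * polar ⇑q t w) • (Pi.single k 1 : Fin m → A)
      - (f k * polar ⇑q w t) • (Pi.single i 1 : Fin m → A)
    = x + (f i * polar ⇑q t w) • (Pi.single k 1 : Fin m → A)
      - (f k * polar ⇑q w t) • (Pi.single i 1 : Fin m → A)
      + (f r * polar ⇑q s u) • (Pi.single p 1 : Fin m → A)
      - (f p * polar ⇑q u s) • (Pi.single r 1 : Fin m → A)
  module
end

section
/- Let v, c, u, d ∈ Q and let 1 ≤ i, k, r, p ≤ m with i ≠ k and r ≠ p. Then the four-fold commutator [[E*_{i,v}, E*_{k,c}], [E*_{r,u}, E*_{p,d}]] is the identity automorphism of M. -/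
open QuadraticMap
open scoped commutatorElement

section AuxFourfold
variable {A Q : Type*} [CommRing A] [AddCommGroup Q] [Module A Q] {m : ℕ}

lemma Estar_apply (q : QuadraticForm A Q) (i : Fin m) (w z : Q) (x f : Fin m → A) :
    Estar q i w (z, x, f) = (z - x i • w, x,
      f + polar ⇑q w z • (Pi.single i 1 : Fin m → A)
        - (x i * q w) • (Pi.single i 1 : Fin m → A)) := rfl

lemma Estar_inv (q : QuadraticForm A Q) (i : Fin m) (w : Q) :
    (Estar q i w)⁻¹ = Estar q i (-w) := by
  apply LinearEquiv.toLinearMap_injective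
  apply LinearMap.ext
  rintro ⟨z, x, f⟩
  simp only [LinearEquiv.coe_coe]
  show (z + x i • w, x,
      f - polar ⇑q w z • (Pi.single i 1 : Fin m → A)
        - (x i * q w) • (Pi.single i 1 : Fin m → A)) = _
  rw [Estar_apply]
  refine Prod.ext ?_ (Prod.ext rfl ?_)
  · show _ = z - x i • (-w); module
  · rw [polar_neg_left, QuadraticMap.map_neg]
    simp only [smul_eq_mul]
    match_scalars <;> ring

lemma comm_Estar_apply (q : QuadraticForm A Q) (i k : Fin m) (v c z : Q) (x f : Fin m → A) :
    ⁅Estar q i v, Estar q k c⁆ (z, x, f) = (z, x,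
      f + (x i * polar ⇑q c v) • (Pi.single k 1 : Fin m → A)
        - (x k * polar ⇑q v c) • (Pi.single i 1 : Fin m → A)) := by
  show (Estar q i v) ((Estar q k c) ((Estar q i v)⁻¹ ((Estar q k c)⁻¹ (z, x, f)))) = _
  rw [Estar_inv, Estar_inv, Estar_apply, Estar_apply, Estar_apply, Estar_apply]
  refine Prod.ext ?_ (Prod.ext rfl ?_)
  · show z - x k • (-c) - x i • (-v) - x k • c - x i • v = z
    module
  · simp only [polar_add_right, polar_sub_right, polar_smul_right, polar_self,
      polar_neg_left, polar_neg_right, QuadraticMap.map_neg, smul_eq_mul]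
    match_scalars <;> ring

lemma comm_Estar_inv_apply (q : QuadraticForm A Q) (i k : Fin m) (v c z : Q) (x f : Fin m → A) :
    ⁅Estar q i v, Estar q k c⁆⁻¹ (z, x, f) = (z, x,
      f - (x i * polar ⇑q c v) • (Pi.single k 1 : Fin m → A)
        + (x k * polar ⇑q v c) • (Pi.single i 1 : Fin m → A)) := by
  show (⁅Estar q i v, Estar q k c⁆ : _ ≃ₗ[A] _).symm (z, x, f) = _
  rw [LinearEquiv.symm_apply_eq, comm_Estar_apply]
  refine Prod.ext rfl (Prod.ext rfl ?_)
  module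

end AuxFourfold

theorem fourfold_commutator_EstarEstar_EstarEstar
    {A Q : Type*} [CommRing A] [Invertible (2 : A)] [AddCommGroup Q] [Module A Q]
    {m : ℕ} (q : QuadraticForm A Q) (i k r p : Fin m)
    (hik : i ≠ k) (hrp : r ≠ p) (v c u d : Q) :
    ⁅⁅Estar q i v, Estar q k c⁆, ⁅Estar q r u, Estar q p d⁆⁆ = 1 := by
  apply LinearEquiv.toLinearMap_injective
  apply LinearMap.ext
  rintro ⟨z, x, f⟩
  simp only [LinearEquiv.coe_coe, LinearEquiv.coe_toLinearMap_one, LinearMap.id_apply]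
  show ⁅Estar q i v, Estar q k c⁆ (⁅Estar q r u, Estar q p d⁆
    (⁅Estar q i v, Estar q k c⁆⁻¹ (⁅Estar q r u, Estar q p d⁆⁻¹ (z, x, f)))) = (z, x, f)
  rw [comm_Estar_inv_apply, comm_Estar_inv_apply, comm_Estar_apply, comm_Estar_apply]
  refine Prod.ext rfl (Prod.ext rfl ?_)
  module
end
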